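/- arXiv:1104.3727 — 3 statements merged into one kernel-verified Lean document; each statement's English description precedes it below -/
import Mathlib

section
/- Let C be a binary doubly even self-dual code of length 40 and, for each w, let A_w denote the number of codewords of C of weight w. Then A₈ = 285 + 24·A₄, A₁₂ = 21280 + 92·A₄, A₁₆ = 239970 − 600·A₄, and A₂₀ = 525504 + 966·A₄. -/
open Finset

/-- Hamming weight of a binary vector: number of nonzero coordinates. -/
def wt {n : ℕ} (x : Fin n → ZMod 2) : ℕ := (Finset.univ.filter fun i => x i ≠ 0).card

/-- The dual code with respect to the standard inner product. -/
def dualCode {n : ℕ} (C : Submodule (ZMod 2) (Fin n → ZMod 2)) :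
    Submodule (ZMod 2) (Fin n → ZMod 2) where
  carrier := {x | ∀ y ∈ C, ∑ i, x i * y i = 0}
  add_mem' := by
    intro a b ha hb y hy
    simp only [Set.mem_setOf_eq] at *
    simp [Pi.add_apply, add_mul, Finset.sum_add_distrib, ha y hy, hb y hy]
  zero_mem' := by intro y hy; simp
  smul_mem' := by
    intro c a ha y hy
    simp only [Set.mem_setOf_eq] at *
    simp [Pi.smul_apply, smul_eq_mul, mul_assoc, ← Finset.mul_sum, ha y hy]

/-- A code is self-dual if it equals its dual code. -/
def isSelfDual {n : ℕ} (C : Submodule (ZMod 2) (Fin n → ZMod 2)) : Prop := dualCode C = C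

/-- A code is doubly even if every codeword has weight divisible by 4. -/
def isDoublyEven {n : ℕ} (C : Submodule (ZMod 2) (Fin n → ZMod 2)) : Prop :=
  ∀ x ∈ C, 4 ∣ wt x

/-- Minimum weight of a code: the smallest weight of a nonzero codeword. -/
noncomputable def minWt {n : ℕ} (C : Submodule (ZMod 2) (Fin n → ZMod 2)) : ℕ :=
  sInf {w | ∃ x ∈ C, x ≠ 0 ∧ wt x = w}

/-- The linear map on `Fin n → ZMod 2` given by permuting coordinates. -/
def permMap {n : ℕ} (σ : Equiv.Perm (Fin n)) :
    (Fin n → ZMod 2) →ₗ[ZMod 2] (Fin n → ZMod 2) :=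
  LinearMap.funLeft (ZMod 2) (ZMod 2) σ

/-- Equivalence of codes: one is obtained from the other by permuting coordinates. -/
def codeEquiv {n : ℕ} (C C' : Submodule (ZMod 2) (Fin n → ZMod 2)) : Prop :=
  ∃ σ : Equiv.Perm (Fin n), Submodule.map (permMap σ) C = C'

/-- `numWt C w` is `A_w`, the number of codewords of weight `w` in `C`. -/
noncomputable def numWt {n : ℕ} (C : Submodule (ZMod 2) (Fin n → ZMod 2)) (w : ℕ) : ℕ :=
  Set.ncard {x ∈ (C : Set (Fin n → ZMod 2)) | wt x = w}

def chi (a : ZMod 2) : ℤ := if a = 0 then 1 else -1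

lemma chi_add (a b : ZMod 2) : chi (a + b) = chi a * chi b := by revert a b; decide

lemma chi_zero : chi 0 = 1 := rfl

lemma chi_sum {ι : Type*} (s : Finset ι) (f : ι → ZMod 2) :
    chi (∑ i ∈ s, f i) = ∏ i ∈ s, chi (f i) := by
  induction s using Finset.cons_induction with
  | empty => simp [chi_zero]
  | cons a s ha ih => rw [Finset.sum_cons, Finset.prod_cons, chi_add, ih]

lemma sum_univ_zmod2 (f : ZMod 2 → ℤ) : ∑ v : ZMod 2, f v = f 0 + f 1 := by
  rw [show (Finset.univ : Finset (ZMod 2)) = {0, 1} from by decide]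
  rw [Finset.sum_pair (by decide)]

section AuxSection

variable {n : ℕ} {C : Submodule (ZMod 2) (Fin n → ZMod 2)}
  {F : Finset (Fin n → ZMod 2)} (memF : ∀ x, x ∈ F ↔ x ∈ C)

include memF

lemma char_sum (hSD : isSelfDual C) (y : Fin n → ZMod 2) :
    ∑ c ∈ F, chi (∑ i, y i * c i) = if y ∈ F then (F.card : ℤ) else 0 := by
  by_cases hy : y ∈ F
  all_goals rw [memF] at hy
  · rw [if_pos ((memF y).mpr hy)]
    have hy' : y ∈ dualCode C := by rw [hSD]; exact hy
    rw [Finset.sum_congr rfl (fun c hc => ?_), Finset.sum_const, nsmul_eq_mul, mul_one]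
    have := hy' c ((memF c).mp hc)
    rw [this, chi_zero]
  · rw [if_neg (fun h => hy ((memF y).mp h))]
    have hy' : y ∉ dualCode C := by rw [hSD]; exact hy
    have : ∃ c₀ ∈ C, ∑ i, y i * c₀ i ≠ 0 := by
      by_contra h
      push_neg at h
      exact hy' h
    obtain ⟨c₀, hc₀C, hc₀⟩ := this
    have hc₀1 : ∑ i, y i * c₀ i = 1 := by
      have : ∀ a : ZMod 2, a ≠ 0 → a = 1 := by decide
      exact this _ hc₀
    have key : ∑ c ∈ F, chi (∑ i, y i * c i) = ∑ c ∈ F, chi (∑ i, y i * (c + c₀) i) := by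
      refine (Finset.sum_nbij' (fun c => c + c₀) (fun c => c + c₀) ?_ ?_ ?_ ?_ ?_).symm
      · intro a ha; rw [memF] at *; exact C.add_mem ha hc₀C
      · intro a ha; rw [memF] at *; exact C.add_mem ha hc₀C
      · intro a _; funext i; simp [CharTwo.add_self_eq_zero, add_assoc]
      · intro a _; funext i; simp [CharTwo.add_self_eq_zero, add_assoc]
      · intro a _; rfl
    have key2 : ∀ c : Fin n → ZMod 2, chi (∑ i, y i * (c + c₀) i) = - chi (∑ i, y i * c i) := by
      intro c
      have : (∑ i, y i * (c + c₀) i) = (∑ i, y i * c i) + (∑ i, y i * c₀ i) := by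
        rw [← Finset.sum_add_distrib]
        exact Finset.sum_congr rfl fun i _ => by simp [Pi.add_apply, mul_add]
      rw [this, hc₀1, chi_add]
      simp [chi]
    rw [Finset.sum_congr rfl (fun c _ => key2 c), Finset.sum_neg_distrib] at key
    linarith

lemma key_identity (hSD : isSelfDual C) (T : Finset (Fin n)) :
    (2 : ℤ) ^ T.card * ((F.filter fun c => ∀ i ∈ T, c i = 0).card : ℤ)
      = (F.card : ℤ) * ((F.filter fun y => ∀ i ∉ T, y i = 0).card : ℤ) := by
  classical
  set s : Fin n → Finset (ZMod 2) := fun i => if i ∈ T then Finset.univ else {0} with hs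
  have mem_pi : ∀ y : Fin n → ZMod 2, y ∈ Fintype.piFinset s ↔ ∀ i ∉ T, y i = 0 := by
    intro y
    rw [Fintype.mem_piFinset]
    constructor
    · intro h i hi
      have := h i
      rw [hs] at this
      simp only [if_neg hi, Finset.mem_singleton] at this
      exact this
    · intro h i
      by_cases hi : i ∈ T
      · simp [hs, hi]
      · simp [hs, hi, h i hi]
  have wayA : ∑ y ∈ Fintype.piFinset s, ∑ c ∈ F, chi (∑ i, y i * c i)
      = (F.card : ℤ) * ((F.filter fun y => ∀ i ∉ T, y i = 0).card : ℤ) := by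
    have hset : (Fintype.piFinset s).filter (· ∈ F) = F.filter (fun y => ∀ i ∉ T, y i = 0) := by
      ext y
      simp only [Finset.mem_filter]
      rw [mem_pi]
      tauto
    rw [Finset.sum_congr rfl (fun y _ => char_sum memF hSD y), ← Finset.sum_filter, hset,
      Finset.sum_const, nsmul_eq_mul, mul_comm]
  have hg : ∀ a : ZMod 2, 1 + chi a = if a = 0 then 2 else 0 := by decide
  have wayB : ∑ y ∈ Fintype.piFinset s, ∑ c ∈ F, chi (∑ i, y i * c i)
      = (2 : ℤ) ^ T.card * ((F.filter fun c => ∀ i ∈ T, c i = 0).card : ℤ) := by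
    rw [Finset.sum_comm]
    have inner : ∀ c : Fin n → ZMod 2, ∑ y ∈ Fintype.piFinset s, chi (∑ i, y i * c i)
        = if ∀ i ∈ T, c i = 0 then (2 : ℤ) ^ T.card else 0 := by
      intro c
      have h1 : ∑ y ∈ Fintype.piFinset s, chi (∑ i, y i * c i)
          = ∑ y ∈ Fintype.piFinset s, ∏ i, chi (y i * c i) :=
        Finset.sum_congr rfl fun y _ => chi_sum _ _
      rw [h1, ← Finset.prod_univ_sum s (fun i v => chi (v * c i))]
      have h2 : ∀ i : Fin n, ∑ v ∈ s i, chi (v * c i)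
          = if i ∈ T then (1 + chi (c i)) else 1 := by
        intro i
        by_cases hi : i ∈ T
        · rw [if_pos hi]
          have hsi : s i = Finset.univ := by simp [hs, hi]
          rw [hsi, sum_univ_zmod2 (fun v => chi (v * c i))]
          simp [chi_zero]
        · rw [if_neg hi]
          have hsi : s i = {0} := by simp [hs, hi]
          rw [hsi]
          simp [chi_zero]
      rw [Finset.prod_congr rfl (fun i _ => h2 i), Finset.prod_ite_mem, Finset.univ_inter]
      by_cases hc : ∀ i ∈ T, c i = 0
      · rw [if_pos hc]
        rw [Finset.prod_congr rfl (fun i hi => by rw [hc i hi, hg, if_pos rfl]),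
          Finset.prod_const]
      · rw [if_neg hc]
        push_neg at hc
        obtain ⟨i₀, hi₀T, hi₀⟩ := hc
        exact Finset.prod_eq_zero hi₀T (by rw [hg, if_neg hi₀])
    rw [Finset.sum_congr rfl (fun c _ => inner c), ← Finset.sum_filter, Finset.sum_const,
      nsmul_eq_mul, mul_comm]
  rw [← wayB, wayA]

omit memF in
lemma card_zeroset (c : Fin n → ZMod 2) :
    (Finset.univ.filter fun i => c i = 0).card = n - wt c := by
  have h := Finset.card_filter_add_card_filter_not
    (s := (Finset.univ : Finset (Fin n))) (p := fun i => c i ≠ 0)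
  simp only [not_not] at h
  rw [Finset.card_univ, Fintype.card_fin] at h
  rw [wt] at *
  omega

omit memF in
lemma count_supersets (S : Finset (Fin n)) (t : ℕ) :
    ((powersetCard t (Finset.univ : Finset (Fin n))).filter fun T => S ⊆ T).card
      = if S.card ≤ t then (n - S.card).choose (t - S.card) else 0 := by
  by_cases h : S.card ≤ t
  · rw [if_pos h]
    have key : ((powersetCard t (Finset.univ : Finset (Fin n))).filter fun T => S ⊆ T).card
        = (powersetCard (t - S.card) Sᶜ).card := by
      apply Finset.card_nbij' (fun T => T \ S) (fun U => U ∪ S)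
      · intro T hT
        simp only [Finset.mem_coe, Finset.mem_filter, Finset.mem_powersetCard] at hT
        obtain ⟨⟨_, hcard⟩, hST⟩ := hT
        rw [Finset.mem_coe, Finset.mem_powersetCard]
        constructor
        · intro i hi
          rw [Finset.mem_sdiff] at hi
          rw [Finset.mem_compl]
          exact hi.2
        · rw [Finset.card_sdiff_of_subset hST, hcard]
      · intro U hU
        rw [Finset.mem_coe, Finset.mem_powersetCard] at hU
        obtain ⟨hUsub, hUcard⟩ := hU
        have hdisj : Disjoint U S := by
          rw [Finset.disjoint_left]
          intro i hiU hiS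
          exact (Finset.mem_compl.mp (hUsub hiU)) hiS
        rw [Finset.mem_coe, Finset.mem_filter, Finset.mem_powersetCard]
        refine ⟨⟨Finset.subset_univ _, ?_⟩, Finset.subset_union_right⟩
        rw [Finset.card_union_of_disjoint hdisj, hUcard]
        omega
      · intro T hT
        simp only [Finset.mem_coe, Finset.mem_filter] at hT
        exact Finset.sdiff_union_of_subset hT.2
      · intro U hU
        rw [Finset.mem_coe, Finset.mem_powersetCard] at hU
        apply Finset.union_sdiff_cancel_right
        rw [Finset.disjoint_left]
        intro i hiU hiS
        exact (Finset.mem_compl.mp (hU.1 hiU)) hiS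
    rw [key, Finset.card_powersetCard, Finset.card_compl, Fintype.card_fin]
  · rw [if_neg h, Finset.card_eq_zero, Finset.filter_eq_empty_iff]
    intro T hT hST
    rw [Finset.mem_powersetCard] at hT
    exact h (hT.2 ▸ Finset.card_le_card hST)

omit memF in
lemma sumA (t : ℕ) :
    ∑ T ∈ powersetCard t (Finset.univ : Finset (Fin n)),
        ((F.filter fun c => ∀ i ∈ T, c i = 0).card)
      = ∑ c ∈ F, (n - wt c).choose t := by
  simp only [Finset.card_filter]
  rw [Finset.sum_comm]
  refine Finset.sum_congr rfl fun c _ => ?_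
  rw [← Finset.card_filter]
  have hset : ((powersetCard t (Finset.univ : Finset (Fin n))).filter fun T => ∀ i ∈ T, c i = 0)
      = powersetCard t (Finset.univ.filter fun i => c i = 0) := by
    ext T
    simp only [Finset.mem_filter, Finset.mem_powersetCard]
    constructor
    · rintro ⟨⟨_, hcard⟩, hz⟩
      exact ⟨fun i hi => Finset.mem_filter.mpr ⟨Finset.mem_univ i, hz i hi⟩, hcard⟩
    · rintro ⟨hsub, hcard⟩
      exact ⟨⟨Finset.subset_univ _, hcard⟩, fun i hi => (Finset.mem_filter.mp (hsub hi)).2⟩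
  rw [hset, Finset.card_powersetCard, card_zeroset]

omit memF in
lemma sumB (t : ℕ) :
    ∑ T ∈ powersetCard t (Finset.univ : Finset (Fin n)),
        ((F.filter fun y => ∀ i ∉ T, y i = 0).card)
      = ∑ c ∈ F, (if wt c ≤ t then (n - wt c).choose (t - wt c) else 0) := by
  simp only [Finset.card_filter]
  rw [Finset.sum_comm]
  refine Finset.sum_congr rfl fun c _ => ?_
  rw [← Finset.card_filter]
  have hcond : ∀ T : Finset (Fin n), (∀ i ∉ T, c i = 0) ↔ (Finset.univ.filter fun i => c i ≠ 0) ⊆ T := by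
    intro T
    constructor
    · intro h i hi
      rw [Finset.mem_filter] at hi
      by_contra hiT
      exact hi.2 (h i hiT)
    · intro h i hiT
      by_contra hci
      exact hiT (h (Finset.mem_filter.mpr ⟨Finset.mem_univ i, hci⟩))
  rw [Finset.filter_congr fun T _ => by rw [hcond T]]
  rw [count_supersets]
  rfl

omit memF in
lemma wt_le (c : Fin n → ZMod 2) : wt c ≤ n := by
  rw [wt]
  calc (Finset.univ.filter fun i => c i ≠ 0).card ≤ (Finset.univ : Finset (Fin n)).card :=
        Finset.card_filter_le _ _
    _ = n := by rw [Finset.card_univ, Fintype.card_fin]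

omit memF in
lemma fiber (f : ℕ → ℕ) :
    ∑ c ∈ F, f (wt c) = ∑ w ∈ Finset.range (n + 1), (F.filter fun c => wt c = w).card * f w := by
  rw [← Finset.sum_fiberwise_of_maps_to (g := fun c => wt c) (t := Finset.range (n + 1))
    (fun c _ => Finset.mem_range.mpr (Nat.lt_succ_of_le (wt_le c))) (fun c => f (wt c))]
  refine Finset.sum_congr rfl fun w _ => ?_
  rw [Finset.sum_congr rfl (fun c hc => by rw [(Finset.mem_filter.mp hc).2]),
    Finset.sum_const, smul_eq_mul]

lemma numWt_eq (w : ℕ) : numWt C w = (F.filter fun c => wt c = w).card := by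
  rw [numWt]
  have hst : {x ∈ (C : Set (Fin n → ZMod 2)) | wt x = w} = ↑(F.filter fun c => wt c = w) := by
    ext x
    simp only [Set.mem_setOf_eq, Finset.coe_filter, SetLike.mem_coe, ← memF x]
  rw [hst, Set.ncard_coe_finset]

lemma card_sq (hSD : isSelfDual C) : F.card * F.card = 2 ^ n := by
  have h := key_identity memF hSD (Finset.univ : Finset (Fin n))
  have h1 : F.filter (fun c => ∀ i ∈ Finset.univ, c i = 0) = {0} := by
    ext c
    simp only [Finset.mem_filter, Finset.mem_singleton]
    constructor
    · rintro ⟨_, h2⟩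
      funext i
      exact h2 i (Finset.mem_univ i)
    · rintro rfl
      exact ⟨(memF 0).mpr C.zero_mem, fun i _ => rfl⟩
  have h2 : F.filter (fun y => ∀ i ∉ Finset.univ, y i = 0) = F := by
    apply Finset.filter_true_of_mem
    intro y _ i hi
    exact absurd (Finset.mem_univ i) hi
  rw [h1, h2, Finset.card_univ, Fintype.card_fin, Finset.card_singleton] at h
  rw [Nat.cast_one, mul_one] at h
  exact_mod_cast h.symm

lemma moment (hSD : isSelfDual C) (t : ℕ) :
    2 ^ t * ∑ c ∈ F, (n - wt c).choose t
      = F.card * ∑ c ∈ F, (if wt c ≤ t then (n - wt c).choose (t - wt c) else 0) := by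
  have keyN : ∀ T ∈ powersetCard t (Finset.univ : Finset (Fin n)),
      2 ^ t * (F.filter fun c => ∀ i ∈ T, c i = 0).card
        = F.card * (F.filter fun y => ∀ i ∉ T, y i = 0).card := by
    intro T hT
    have h := key_identity memF hSD T
    rw [(Finset.mem_powersetCard.mp hT).2] at h
    exact_mod_cast h
  have hsum := Finset.sum_congr rfl keyN
  rw [← Finset.mul_sum, ← Finset.mul_sum, sumA, sumB] at hsum
  exact hsum

omit memF in
lemma wt_eq_zero_iff (c : Fin n → ZMod 2) : wt c = 0 ↔ c = 0 := by
  rw [wt, Finset.card_eq_zero, Finset.filter_eq_empty_iff]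
  constructor
  · intro h
    funext i
    have := h (Finset.mem_univ i)
    simpa using this
  · rintro rfl i _
    simp

omit memF in
lemma sum_eq_wt_cast (y : Fin n → ZMod 2) : ∑ i, y i = (wt y : ZMod 2) := by
  rw [← Finset.sum_filter_of_ne (p := fun i => y i ≠ 0) (fun i _ h => h)]
  have h1 : ∀ i ∈ Finset.univ.filter (fun i => y i ≠ 0), y i = 1 := by
    intro i hi
    have h2 := (Finset.mem_filter.mp hi).2
    have h3 : ∀ a : ZMod 2, a ≠ 0 → a = 1 := by decide
    exact h3 _ h2
  rw [Finset.sum_congr rfl h1, Finset.sum_const, nsmul_eq_mul, mul_one, wt]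

def allOnes (n : ℕ) : Fin n → ZMod 2 := fun _ => 1

omit memF in
lemma allones_mem (hSD : isSelfDual C) (hDE : isDoublyEven C) :
    allOnes n ∈ C := by
  rw [← hSD]
  show ∀ y ∈ C, ∑ i, allOnes n i * y i = 0
  intro y hy
  have h1 : ∑ i, allOnes n i * y i = ∑ i, y i := by simp [allOnes]
  rw [h1, sum_eq_wt_cast]
  have h2 : (2 : ℕ) ∣ wt y := dvd_trans ⟨2, rfl⟩ (hDE y hy)
  exact (ZMod.natCast_eq_zero_iff _ 2).mpr h2

omit memF in
lemma wt_add_allones (x : Fin n → ZMod 2) : wt (x + allOnes n) = n - wt x := by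
  rw [wt]
  have hfe : (Finset.univ.filter fun i => (x + allOnes n) i ≠ 0)
      = (Finset.univ.filter fun i => x i = 0) := by
    apply Finset.filter_congr
    intro i _
    simp only [Pi.add_apply, allOnes]
    have : ∀ a : ZMod 2, (a + 1 ≠ 0 ↔ a = 0) := by decide
    exact this (x i)
  rw [hfe, card_zeroset]

lemma symm_card (hSD : isSelfDual C) (hDE : isDoublyEven C) (w : ℕ) (hw : w ≤ n) :
    (F.filter fun c => wt c = n - w).card = (F.filter fun c => wt c = w).card := by
  have hmem : ∀ x, x ∈ F → (x + allOnes n) ∈ F := fun x hx =>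
    (memF _).mpr (C.add_mem ((memF _).mp hx) (allones_mem hSD hDE))
  have hinv : ∀ x : Fin n → ZMod 2, ((x + allOnes n) + allOnes n) = x := by
    intro x
    funext i
    simp [allOnes, add_assoc, CharTwo.add_self_eq_zero]
  apply Finset.card_nbij' (fun x => x + allOnes n) (fun x => x + allOnes n)
  · intro x hx
    rw [Finset.mem_coe, Finset.mem_filter] at hx ⊢
    refine ⟨hmem x hx.1, ?_⟩
    rw [wt_add_allones, hx.2]
    omega
  · intro x hx
    rw [Finset.mem_coe, Finset.mem_filter] at hx ⊢
    refine ⟨hmem x hx.1, ?_⟩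
    rw [wt_add_allones, hx.2]
  · intro x _
    exact hinv x
  · intro x _
    exact hinv x

end AuxSection

/-- The weight enumerator of a doubly even self-dual code of length 40 is determined
by `A₄`: `A₈ = 285 + 24·A₄`, `A₁₂ = 21280 + 92·A₄`, `A₁₆ = 239970 − 600·A₄` and
`A₂₀ = 525504 + 966·A₄`. -/
theorem weight_enumerator_doubly_even_self_dual_length_40
    (C : Submodule (ZMod 2) (Fin 40 → ZMod 2))
    (hSD : isSelfDual C) (hDE : isDoublyEven C) :
    numWt C 8 = 285 + 24 * numWt C 4 ∧
    numWt C 12 = 21280 + 92 * numWt C 4 ∧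
    (numWt C 16 : ℤ) = 239970 - 600 * (numWt C 4 : ℤ) ∧
    numWt C 20 = 525504 + 966 * numWt C 4 := by
  classical
  set F : Finset (Fin 40 → ZMod 2) := (C : Set (Fin 40 → ZMod 2)).toFinite.toFinset with hF
  have memF : ∀ x, x ∈ F ↔ x ∈ C := fun x => Set.Finite.mem_toFinset _
  -- cardinality
  have hsq := card_sq memF hSD
  have hcard : F.card = 2 ^ 20 := by
    have h2 : F.card ^ 2 = (2 ^ 20) ^ 2 := by
      rw [pow_two, hsq]
      norm_num
    exact Nat.pow_left_injective (by norm_num) h2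
  -- moment equations
  have E : ∀ t : ℕ, 2 ^ t * ∑ w ∈ Finset.range 41, numWt C w * (40 - w).choose t
      = 2 ^ 20 * ∑ w ∈ Finset.range 41, numWt C w * (if w ≤ t then (40 - w).choose (t - w) else 0) := by
    intro t
    have hm := moment memF hSD t
    have h1 := fiber (F := F) (fun w => (40 - w).choose t)
    have h2 := fiber (F := F) (fun w => if w ≤ t then (40 - w).choose (t - w) else 0)
    rw [h1, h2, hcard] at hm
    simp only [← numWt_eq memF] at hm
    exact hm
  -- basic facts
  have h0 : numWt C 0 = 1 := by
    rw [numWt_eq memF]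
    have : F.filter (fun c => wt c = 0) = {0} := by
      ext c
      simp only [Finset.mem_filter, Finset.mem_singleton, wt_eq_zero_iff]
      constructor
      · exact fun h => h.2
      · rintro rfl
        exact ⟨(memF 0).mpr C.zero_mem, rfl⟩
    rw [this, Finset.card_singleton]
  have hz : ∀ w, ¬ (4 ∣ w) → numWt C w = 0 := by
    intro w hw
    rw [numWt_eq memF, Finset.card_eq_zero, Finset.filter_eq_empty_iff]
    intro c hc hwc
    exact hw (hwc ▸ hDE c ((memF c).mp hc))
  have hsym : ∀ w, w ≤ 40 → numWt C (40 - w) = numWt C w := by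
    intro w hw
    rw [numWt_eq memF, numWt_eq memF]
    exact symm_card memF hSD hDE w hw

  -- numerical choose values
  have ch_0_2 : Nat.choose 0 2 = 0 := by decide
  have ch_0_4 : Nat.choose 0 4 = 0 := by decide
  have ch_0_6 : Nat.choose 0 6 = 0 := by decide
  have ch_4_2 : Nat.choose 4 2 = 6 := by decide
  have ch_4_4 : Nat.choose 4 4 = 1 := by decide
  have ch_4_6 : Nat.choose 4 6 = 0 := by decide
  have ch_8_2 : Nat.choose 8 2 = 28 := by decide
  have ch_8_4 : Nat.choose 8 4 = 70 := by decide
  have ch_8_6 : Nat.choose 8 6 = 28 := by decide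
  have ch_12_2 : Nat.choose 12 2 = 66 := by decide
  have ch_12_4 : Nat.choose 12 4 = 495 := by decide
  have ch_12_6 : Nat.choose 12 6 = 924 := by decide
  have ch_16_2 : Nat.choose 16 2 = 120 := by decide
  have ch_16_4 : Nat.choose 16 4 = 1820 := by decide
  have ch_16_6 : Nat.choose 16 6 = 8008 := by decide
  have ch_20_2 : Nat.choose 20 2 = 190 := by decide
  have ch_20_4 : Nat.choose 20 4 = 4845 := by decide
  have ch_20_6 : Nat.choose 20 6 = 38760 := by decide
  have ch_24_2 : Nat.choose 24 2 = 276 := by decide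
  have ch_24_4 : Nat.choose 24 4 = 10626 := by decide
  have ch_24_6 : Nat.choose 24 6 = 134596 := by decide
  have ch_28_2 : Nat.choose 28 2 = 378 := by decide
  have ch_28_4 : Nat.choose 28 4 = 20475 := by decide
  have ch_28_6 : Nat.choose 28 6 = 376740 := by decide
  have ch_32_2 : Nat.choose 32 2 = 496 := by decide
  have ch_32_4 : Nat.choose 32 4 = 35960 := by decide
  have ch_32_6 : Nat.choose 32 6 = 906192 := by decide
  have ch_36_0 : Nat.choose 36 0 = 1 := by decide
  have ch_36_2 : Nat.choose 36 2 = 630 := by decide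
  have ch_36_4 : Nat.choose 36 4 = 58905 := by decide
  have ch_36_6 : Nat.choose 36 6 = 1947792 := by decide
  have ch_40_2 : Nat.choose 40 2 = 780 := by decide
  have ch_40_4 : Nat.choose 40 4 = 91390 := by decide
  have ch_40_6 : Nat.choose 40 6 = 3838380 := by decide
  -- zero weights
  have hz1 : numWt C 1 = 0 := hz 1 (by norm_num)
  have hz2 : numWt C 2 = 0 := hz 2 (by norm_num)
  have hz3 : numWt C 3 = 0 := hz 3 (by norm_num)
  have hz5 : numWt C 5 = 0 := hz 5 (by norm_num)
  have hz6 : numWt C 6 = 0 := hz 6 (by norm_num)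
  have hz7 : numWt C 7 = 0 := hz 7 (by norm_num)
  have hz9 : numWt C 9 = 0 := hz 9 (by norm_num)
  have hz10 : numWt C 10 = 0 := hz 10 (by norm_num)
  have hz11 : numWt C 11 = 0 := hz 11 (by norm_num)
  have hz13 : numWt C 13 = 0 := hz 13 (by norm_num)
  have hz14 : numWt C 14 = 0 := hz 14 (by norm_num)
  have hz15 : numWt C 15 = 0 := hz 15 (by norm_num)
  have hz17 : numWt C 17 = 0 := hz 17 (by norm_num)
  have hz18 : numWt C 18 = 0 := hz 18 (by norm_num)
  have hz19 : numWt C 19 = 0 := hz 19 (by norm_num)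
  have hz21 : numWt C 21 = 0 := hz 21 (by norm_num)
  have hz22 : numWt C 22 = 0 := hz 22 (by norm_num)
  have hz23 : numWt C 23 = 0 := hz 23 (by norm_num)
  have hz25 : numWt C 25 = 0 := hz 25 (by norm_num)
  have hz26 : numWt C 26 = 0 := hz 26 (by norm_num)
  have hz27 : numWt C 27 = 0 := hz 27 (by norm_num)
  have hz29 : numWt C 29 = 0 := hz 29 (by norm_num)
  have hz30 : numWt C 30 = 0 := hz 30 (by norm_num)
  have hz31 : numWt C 31 = 0 := hz 31 (by norm_num)
  have hz33 : numWt C 33 = 0 := hz 33 (by norm_num)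
  have hz34 : numWt C 34 = 0 := hz 34 (by norm_num)
  have hz35 : numWt C 35 = 0 := hz 35 (by norm_num)
  have hz37 : numWt C 37 = 0 := hz 37 (by norm_num)
  have hz38 : numWt C 38 = 0 := hz 38 (by norm_num)
  have hz39 : numWt C 39 = 0 := hz 39 (by norm_num)
  -- symmetry
  have hs40 : numWt C 40 = numWt C 0 := by simpa using hsym 0 (by norm_num)
  have hs36 : numWt C 36 = numWt C 4 := by simpa using hsym 4 (by norm_num)
  have hs32 : numWt C 32 = numWt C 8 := by simpa using hsym 8 (by norm_num)
  have hs28 : numWt C 28 = numWt C 12 := by simpa using hsym 12 (by norm_num)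
  have hs24 : numWt C 24 = numWt C 16 := by simpa using hsym 16 (by norm_num)
  have E0 := E 0
  have E2 := E 2
  have E4 := E 4
  have E6 := E 6
  simp only [Finset.sum_range_succ, Finset.sum_range_zero] at E0 E2 E4 E6
  norm_num [hz1, hz2, hz3, hz5, hz6, hz7, hz9, hz10, hz11, hz13, hz14, hz15, hz17, hz18, hz19, hz21, hz22, hz23, hz25, hz26, hz27, hz29, hz30, hz31, hz33, hz34, hz35, hz37, hz38, hz39, hs40, hs36, hs32, hs28, hs24, h0, ch_0_2, ch_0_4, ch_0_6, ch_4_2, ch_4_4, ch_4_6, ch_8_2, ch_8_4, ch_8_6, ch_12_2, ch_12_4, ch_12_6, ch_16_2, ch_16_4, ch_16_6, ch_20_2, ch_20_4, ch_20_6, ch_24_2, ch_24_4, ch_24_6, ch_28_2, ch_28_4, ch_28_6, ch_32_2, ch_32_4, ch_32_6, ch_36_0, ch_36_2, ch_36_4, ch_36_6, ch_40_2, ch_40_4, ch_40_6, Nat.choose_zero_right] at E0 E2 E4 E6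
  refine ⟨?_, ?_, ?_, ?_⟩ <;> omega
end

section
/- Let C be a binary doubly even code of length n containing the all-one vector 𝟏. Then the map q_C : C^⊥/C → 𝔽₂ given by q_C(x + C) = (wt(x)/2) mod 2 is well-defined; that is, every x ∈ C^⊥ has even weight, and if x, y ∈ C^⊥ satisfy x + y ∈ C then wt(x)/2 ≡ wt(y)/2 (mod 2). -/
open Finset

lemma zmod2_ne_zero : ∀ {a : ZMod 2}, a ≠ 0 → a = 1 := by decide

lemma sum_eq_wt {n : ℕ} (x : Fin n → ZMod 2) : ∑ i, x i = (wt x : ZMod 2) := by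
  rw [wt, ← Finset.sum_filter_ne_zero,
    Finset.sum_congr rfl (fun i hi => zmod2_ne_zero (Finset.mem_filter.mp hi).2)]
  simp

lemma inner_eq_card {n : ℕ} (x y : Fin n → ZMod 2) :
    ∑ i, x i * y i =
      (((Finset.univ.filter fun i => x i ≠ 0) ∩ (Finset.univ.filter fun i => y i ≠ 0)).card : ZMod 2) := by
  rw [← Finset.sum_filter_ne_zero]
  have h : (Finset.univ.filter fun i => x i * y i ≠ 0) =
      ((Finset.univ.filter fun i => x i ≠ 0) ∩ (Finset.univ.filter fun i => y i ≠ 0)) := by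
    ext i
    simp [mul_ne_zero_iff, and_assoc]
  rw [h]
  calc ∑ i ∈ ((Finset.univ.filter fun i => x i ≠ 0) ∩ (Finset.univ.filter fun i => y i ≠ 0)), x i * y i
      = ∑ _i ∈ ((Finset.univ.filter fun i => x i ≠ 0) ∩ (Finset.univ.filter fun i => y i ≠ 0)), (1 : ZMod 2) := by
        refine Finset.sum_congr rfl fun i hi => ?_
        have hi' := Finset.mem_inter.mp hi
        rw [zmod2_ne_zero (Finset.mem_filter.mp hi'.1).2,
          zmod2_ne_zero (Finset.mem_filter.mp hi'.2).2, one_mul]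
    _ = _ := by simp

lemma wt_add_eq {n : ℕ} (x y : Fin n → ZMod 2) :
    wt (x + y) + 2 * ((Finset.univ.filter fun i => x i ≠ 0) ∩ (Finset.univ.filter fun i => y i ≠ 0)).card
      = wt x + wt y := by
  have h : (Finset.univ.filter fun i => (x + y) i ≠ 0) =
      symmDiff (Finset.univ.filter fun i => x i ≠ 0) (Finset.univ.filter fun i => y i ≠ 0) := by
    ext i
    simp only [Finset.mem_symmDiff, Finset.mem_filter, Finset.mem_univ, true_and, Pi.add_apply]
    exact (by decide : ∀ a b : ZMod 2, (a + b ≠ 0) ↔ (a ≠ 0 ∧ ¬b ≠ 0 ∨ b ≠ 0 ∧ ¬a ≠ 0)) (x i) (y i)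
  have hsd : ∀ A B : Finset (Fin n),
      (symmDiff A B).card + (A ∩ B).card = (A ∪ B).card := by
    intro A B
    rw [← Finset.card_union_of_disjoint (by
      simp only [Finset.disjoint_left, symmDiff_def, Finset.sup_eq_union, Finset.mem_union,
        Finset.mem_sdiff, Finset.mem_inter]
      tauto)]
    congr 1
    ext i
    simp only [symmDiff_def, Finset.sup_eq_union, Finset.mem_union, Finset.mem_sdiff,
      Finset.mem_inter]
    tauto
  have huai := Finset.card_union_add_card_inter (Finset.univ.filter fun i => x i ≠ 0)
    (Finset.univ.filter fun i => y i ≠ 0)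
  have hsd' := hsd (Finset.univ.filter fun i => x i ≠ 0) (Finset.univ.filter fun i => y i ≠ 0)
  simp only [wt, h]
  omega

/-- For a binary doubly even code `C` of length `n` containing the all-one vector,
the map `q_C : C^⊥/C → 𝔽₂`, `x + C ↦ (wt x / 2) mod 2`, is well-defined: every
`x ∈ C^⊥` has even weight, and if `x, y ∈ C^⊥` with `x + y ∈ C` then
`wt x / 2 ≡ wt y / 2 (mod 2)`. -/
theorem qC_well_defined {n : ℕ} (C : Submodule (ZMod 2) (Fin n → ZMod 2))
    (hDE : isDoublyEven C) (hone : (fun _ => 1 : Fin n → ZMod 2) ∈ C) :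
    (∀ x ∈ dualCode C, 2 ∣ wt x) ∧
    (∀ x ∈ dualCode C, ∀ y ∈ dualCode C, x + y ∈ C →
      wt x / 2 ≡ wt y / 2 [MOD 2]) := by
  have heven : ∀ x ∈ dualCode C, 2 ∣ wt x := by
    intro x hx
    have h1 := hx _ hone
    simp only [mul_one] at h1
    rw [sum_eq_wt] at h1
    exact (ZMod.natCast_eq_zero_iff _ 2).mp h1
  refine ⟨heven, ?_⟩
  intro x hx y hy hxy
  have hinner : ∑ i, x i * y i = 0 := by
    have h1 : ∑ i, x i * (x + y) i = 0 := hx _ hxy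
    have h2 : ∑ i, x i * x i = 0 := by
      have hsq : ∀ i, x i * x i = x i := fun i =>
        (by decide : ∀ a : ZMod 2, a * a = a) (x i)
      simp only [hsq]
      rw [sum_eq_wt]
      exact (ZMod.natCast_eq_zero_iff _ 2).mpr (heven x hx)
    simp only [Pi.add_apply, mul_add, Finset.sum_add_distrib, h2, zero_add] at h1
    exact h1
  rw [inner_eq_card] at hinner
  have hk : 2 ∣ ((Finset.univ.filter fun i => x i ≠ 0) ∩ (Finset.univ.filter fun i => y i ≠ 0)).card :=
    (ZMod.natCast_eq_zero_iff _ 2).mp hinner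
  have h4 : 4 ∣ wt (x + y) := hDE _ hxy
  have hadd := wt_add_eq x y
  obtain ⟨a, ha⟩ := heven x hx
  obtain ⟨b, hb⟩ := heven y hy
  obtain ⟨k, hkk⟩ := hk
  obtain ⟨m, hm⟩ := h4
  rw [ha, hb, Nat.ModEq]
  omega
end

section
/- For i = 1, 2, let C_i be a binary doubly even code of length n_i containing the all-one vector, and let f : C₁^⊥/C₁ → C₂^⊥/C₂ be an isometry. Then D(C₁, C₂, f) = {(x₁, x₂) : x₁ ∈ C₁^⊥, x₂ ∈ f(x₁ + C₁)} is a doubly even self-dual code of length n₁ + n₂. -/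
open Finset

/-- The quotient `C^⊥ / C` (with `C` viewed inside its dual code). -/
abbrev resQuot {n : ℕ} (C : Submodule (ZMod 2) (Fin n → ZMod 2)) :=
  ↥(dualCode C) ⧸ Submodule.comap (dualCode C).subtype C

/-- A bijective linear map `f : C₁^⊥/C₁ → C₂^⊥/C₂` is an isometry if
`q_{C₁} = q_{C₂} ∘ f`, i.e. whenever `y ∈ C₂^⊥` represents the image under `f` of the
class of `x ∈ C₁^⊥`, we have `wt x / 2 ≡ wt y / 2 (mod 2)`. -/
def IsIsometry {n₁ n₂ : ℕ} {C₁ : Submodule (ZMod 2) (Fin n₁ → ZMod 2)}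
    {C₂ : Submodule (ZMod 2) (Fin n₂ → ZMod 2)}
    (f : resQuot C₁ ≃ₗ[ZMod 2] resQuot C₂) : Prop :=
  ∀ (x : ↥(dualCode C₁)) (y : ↥(dualCode C₂)),
    f (Submodule.Quotient.mk x) = Submodule.Quotient.mk y →
      wt x.1 / 2 ≡ wt y.1 / 2 [MOD 2]

/-- The set `D(C₁, C₂, f) = {(x₁, x₂) | x₁ ∈ C₁^⊥, x₂ ∈ f(x₁ + C₁)}`. -/
def DSet {n₁ n₂ : ℕ} (C₁ : Submodule (ZMod 2) (Fin n₁ → ZMod 2))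
    (C₂ : Submodule (ZMod 2) (Fin n₂ → ZMod 2))
    (f : resQuot C₁ ≃ₗ[ZMod 2] resQuot C₂) : Set (Fin (n₁ + n₂) → ZMod 2) :=
  {z | ∃ (x : ↥(dualCode C₁)) (y : ↥(dualCode C₂)),
    f (Submodule.Quotient.mk x) = Submodule.Quotient.mk y ∧ z = Fin.append x.1 y.1}


/-! ### Auxiliary lemmas -/

section Aux

open Module

lemma wt_eq_sum {n : ℕ} (x : Fin n → ZMod 2) :
    wt x = ∑ i, if x i ≠ 0 then 1 else 0 := by
  rw [wt, Finset.card_filter]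

lemma sum_mul_eq_card {n : ℕ} (x y : Fin n → ZMod 2) :
    ∑ i, x i * y i = (((Finset.univ.filter fun i => x i ≠ 0 ∧ y i ≠ 0).card : ℕ) : ZMod 2) := by
  rw [Finset.card_filter, Nat.cast_sum]
  refine Finset.sum_congr rfl fun i _ => ?_
  have : ∀ a b : ZMod 2, a * b = ((if a ≠ 0 ∧ b ≠ 0 then (1:ℕ) else 0 : ℕ) : ZMod 2) := by decide
  exact this _ _

lemma wt_add_aux {n : ℕ} (x y : Fin n → ZMod 2) :
    wt (x + y) + 2 * (Finset.univ.filter fun i => x i ≠ 0 ∧ y i ≠ 0).card = wt x + wt y := by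
  rw [wt_eq_sum, wt_eq_sum, wt_eq_sum, Finset.card_filter, Finset.mul_sum, ← Finset.sum_add_distrib,
    ← Finset.sum_add_distrib]
  refine Finset.sum_congr rfl fun i _ => ?_
  have : ∀ a b : ZMod 2, (if a + b ≠ 0 then 1 else 0) + 2 * (if a ≠ 0 ∧ b ≠ 0 then 1 else 0)
      = (if a ≠ 0 then 1 else 0) + (if b ≠ 0 then 1 else 0) := by decide
  exact this (x i) (y i)

lemma wt_append {n₁ n₂ : ℕ} (x : Fin n₁ → ZMod 2) (y : Fin n₂ → ZMod 2) :
    wt (Fin.append x y) = wt x + wt y := by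
  rw [wt_eq_sum, wt_eq_sum, wt_eq_sum, Fin.sum_univ_add]
  simp [Fin.append_left, Fin.append_right]

lemma mem_dualCode {n : ℕ} {C : Submodule (ZMod 2) (Fin n → ZMod 2)}
    {x : Fin n → ZMod 2} : x ∈ dualCode C ↔ ∀ y ∈ C, ∑ i, x i * y i = 0 := Iff.rfl

/-- A doubly even code is self-orthogonal. -/
lemma doublyEven_le_dual {n : ℕ} {C : Submodule (ZMod 2) (Fin n → ZMod 2)}
    (h : isDoublyEven C) : C ≤ dualCode C := by
  intro x hx
  rw [mem_dualCode]
  intro y hy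
  rw [sum_mul_eq_card]
  rw [ZMod.natCast_eq_zero_iff]
  have h1 := wt_add_aux x y
  have h2 := h x hx
  have h3 := h y hy
  have h4 := h _ (C.add_mem hx hy)
  omega

lemma wt_even_of_mem_dual {n : ℕ} {C : Submodule (ZMod 2) (Fin n → ZMod 2)}
    (hone : (fun _ => 1 : Fin n → ZMod 2) ∈ C) {x : Fin n → ZMod 2}
    (hx : x ∈ dualCode C) : 2 ∣ wt x := by
  have := hx _ hone
  rw [sum_mul_eq_card] at this
  rw [ZMod.natCast_eq_zero_iff] at this
  have hfilter : (Finset.univ.filter fun i => x i ≠ 0 ∧ (1 : ZMod 2) ≠ 0) =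
      Finset.univ.filter fun i => x i ≠ 0 := by
    apply Finset.filter_congr
    intro i _
    simp
  rw [hfilter] at this
  exact this

noncomputable section DotForm

/-- The standard dot product bilinear form. -/
def dotForm (n : ℕ) : LinearMap.BilinForm (ZMod 2) (Fin n → ZMod 2) :=
  LinearMap.mk₂ (ZMod 2) (fun x y => ∑ i, x i * y i)
    (fun x x' y => by simp [add_mul, Finset.sum_add_distrib])
    (fun c x y => by simp [Finset.mul_sum, mul_assoc])
    (fun x y y' => by simp [mul_add, Finset.sum_add_distrib])
    (fun c x y => by simp [Finset.mul_sum, mul_left_comm])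

lemma dotForm_apply {n : ℕ} (x y : Fin n → ZMod 2) : dotForm n x y = ∑ i, x i * y i := rfl

lemma dotForm_nondegen (n : ℕ) : (dotForm n).Nondegenerate := by
  refine ⟨fun x hx => ?_, fun x hx => ?_⟩
  funext i
  have := hx (Pi.single i 1)
  rw [dotForm_apply] at this
  simpa [Pi.single_apply, Finset.sum_ite_eq] using this
  funext i
  have := hx (Pi.single i 1)
  rw [dotForm_apply] at this
  simpa [Pi.single_apply, Finset.sum_ite_eq] using this

lemma dotForm_refl (n : ℕ) : (dotForm n).IsRefl := by
  intro x y h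
  rw [dotForm_apply] at h ⊢
  rw [← h]
  exact Finset.sum_congr rfl fun i _ => mul_comm _ _

lemma dualCode_eq_orthogonal {n : ℕ} (C : Submodule (ZMod 2) (Fin n → ZMod 2)) :
    dualCode C = (dotForm n).orthogonal C := by
  ext x
  exact ⟨fun hx y hy => dotForm_refl n _ _ (hx y hy),
    fun hx y hy => dotForm_refl n _ _ (hx y hy)⟩

lemma finrank_dualCode {n : ℕ} (C : Submodule (ZMod 2) (Fin n → ZMod 2)) :
    finrank (ZMod 2) (dualCode C) + finrank (ZMod 2) C = n := by
  rw [dualCode_eq_orthogonal,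
    LinearMap.BilinForm.finrank_orthogonal (dotForm_nondegen n)]
  have h1 : finrank (ZMod 2) C ≤ finrank (ZMod 2) (Fin n → ZMod 2) := Submodule.finrank_le C
  have h2 : finrank (ZMod 2) (Fin n → ZMod 2) = n := by simp
  omega

end DotForm

/-- The linear map sending a pair `(x, y)` with `x ∈ C₁^⊥`, `y ∈ C₂^⊥` to the
concatenation `(x, y)`. -/
def appendMapL {n₁ n₂ : ℕ} (C₁ : Submodule (ZMod 2) (Fin n₁ → ZMod 2))
    (C₂ : Submodule (ZMod 2) (Fin n₂ → ZMod 2)) :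
    (↥(dualCode C₁) × ↥(dualCode C₂)) →ₗ[ZMod 2] (Fin (n₁ + n₂) → ZMod 2) where
  toFun p := Fin.append p.1.1 p.2.1
  map_add' p q := by
    funext i
    induction i using Fin.addCases with
    | left j => simp [Fin.append_left]
    | right j => simp [Fin.append_right]
  map_smul' c p := by
    funext i
    induction i using Fin.addCases with
    | left j => simp [Fin.append_left]
    | right j => simp [Fin.append_right]

lemma appendMapL_injective {n₁ n₂ : ℕ} (C₁ : Submodule (ZMod 2) (Fin n₁ → ZMod 2))
    (C₂ : Submodule (ZMod 2) (Fin n₂ → ZMod 2)) :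
    Function.Injective (appendMapL C₁ C₂) := by
  rw [← LinearMap.ker_eq_bot]
  rw [LinearMap.ker_eq_bot']
  rintro ⟨x, y⟩ h
  have h' : Fin.append x.1 y.1 = 0 := h
  have hx : x.1 = 0 := by
    funext j
    have := congrFun h' (Fin.castAdd n₂ j)
    simpa [Fin.append_left] using this
  have hy : y.1 = 0 := by
    funext j
    have := congrFun h' (Fin.natAdd n₁ j)
    simpa [Fin.append_right] using this
  exact Prod.ext (Subtype.ext hx) (Subtype.ext hy)

end Aux

set_option maxHeartbeats 1600000 in
set_option synthInstance.maxHeartbeats 400000 in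
/-- For doubly even codes `C₁, C₂` of lengths `n₁, n₂` containing the all-one vector, and
an isometry `f : C₁^⊥/C₁ → C₂^⊥/C₂`, the set `D(C₁, C₂, f)` is a doubly even self-dual
code of length `n₁ + n₂`. -/
theorem DSet_doubly_even_self_dual {n₁ n₂ : ℕ}
    (C₁ : Submodule (ZMod 2) (Fin n₁ → ZMod 2))
    (C₂ : Submodule (ZMod 2) (Fin n₂ → ZMod 2))
    (hDE₁ : isDoublyEven C₁) (hDE₂ : isDoublyEven C₂)
    (hone₁ : (fun _ => 1 : Fin n₁ → ZMod 2) ∈ C₁)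
    (hone₂ : (fun _ => 1 : Fin n₂ → ZMod 2) ∈ C₂)
    (f : resQuot C₁ ≃ₗ[ZMod 2] resQuot C₂) (hf : IsIsometry f) :
    ∃ D : Submodule (ZMod 2) (Fin (n₁ + n₂) → ZMod 2),
      (↑D : Set (Fin (n₁ + n₂) → ZMod 2)) = DSet C₁ C₂ f ∧
      isSelfDual D ∧ isDoublyEven D := by
  classical
  -- the defect map whose kernel describes D
  set Q₁ := Submodule.comap (dualCode C₁).subtype C₁ with hQ₁
  set Q₂ := Submodule.comap (dualCode C₂).subtype C₂ with hQ₂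
  set h : (↥(dualCode C₁) × ↥(dualCode C₂)) →ₗ[ZMod 2] resQuot C₂ :=
    (f.toLinearMap.comp (Q₁.mkQ.comp (LinearMap.fst (ZMod 2) _ _))) -
      (Q₂.mkQ.comp (LinearMap.snd (ZMod 2) _ _)) with hh
  have h_apply : ∀ p : ↥(dualCode C₁) × ↥(dualCode C₂),
      h p = f (Submodule.Quotient.mk p.1) - Submodule.Quotient.mk p.2 := by
    intro p; rfl
  set S := LinearMap.ker h with hS
  set D := Submodule.map (appendMapL C₁ C₂) S with hD
  have hmemS : ∀ p : ↥(dualCode C₁) × ↥(dualCode C₂),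
      p ∈ S ↔ f (Submodule.Quotient.mk p.1) = Submodule.Quotient.mk p.2 := by
    intro p
    rw [hS, LinearMap.mem_ker, h_apply, sub_eq_zero]
  -- carrier equality
  have hcarrier : (↑D : Set (Fin (n₁ + n₂) → ZMod 2)) = DSet C₁ C₂ f := by
    ext z
    constructor
    · rintro ⟨⟨x, y⟩, hp, rfl⟩
      exact ⟨x, y, (hmemS _).1 hp, rfl⟩
    · rintro ⟨x, y, hxy, rfl⟩
      exact ⟨(x, y), (hmemS _).2 hxy, rfl⟩
  -- doubly even
  have hDE : isDoublyEven D := by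
    intro z hz
    obtain ⟨⟨x, y⟩, hp, rfl⟩ := hz
    have hxy := (hmemS _).1 hp
    have hmod := hf x y hxy
    have hx2 : 2 ∣ wt x.1 := wt_even_of_mem_dual hone₁ x.2
    have hy2 : 2 ∣ wt y.1 := wt_even_of_mem_dual hone₂ y.2
    have happ : wt (appendMapL C₁ C₂ (x, y)) = wt x.1 + wt y.1 := wt_append _ _
    rw [happ]
    have := hmod
    unfold Nat.ModEq at this
    omega
  -- self-orthogonal
  have hle : D ≤ dualCode D := doublyEven_le_dual hDE
  -- dimension count
  have hC₁le : C₁ ≤ dualCode C₁ := doublyEven_le_dual hDE₁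
  have hC₂le : C₂ ≤ dualCode C₂ := doublyEven_le_dual hDE₂
  have hk₁ : Module.finrank (ZMod 2) Q₁ = Module.finrank (ZMod 2) C₁ :=
    (Submodule.comapSubtypeEquivOfLe hC₁le).finrank_eq
  have hk₂ : Module.finrank (ZMod 2) Q₂ = Module.finrank (ZMod 2) C₂ :=
    (Submodule.comapSubtypeEquivOfLe hC₂le).finrank_eq
  have hq₁ : Module.finrank (ZMod 2) (resQuot C₁) + Module.finrank (ZMod 2) Q₁ =
      Module.finrank (ZMod 2) ↥(dualCode C₁) := Submodule.finrank_quotient_add_finrank Q₁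
  have hq₂ : Module.finrank (ZMod 2) (resQuot C₂) + Module.finrank (ZMod 2) Q₂ =
      Module.finrank (ZMod 2) ↥(dualCode C₂) := Submodule.finrank_quotient_add_finrank Q₂
  have hqeq : Module.finrank (ZMod 2) (resQuot C₁) = Module.finrank (ZMod 2) (resQuot C₂) :=
    f.finrank_eq
  have hn₁ := finrank_dualCode C₁
  have hn₂ := finrank_dualCode C₂
  have hnD := finrank_dualCode D
  -- h is surjective
  have hsurj : Function.Surjective h := by
    intro q
    obtain ⟨y, rfl⟩ := Submodule.Quotient.mk_surjective Q₂ q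
    refine ⟨(0, -y), ?_⟩
    rw [h_apply]
    simp
  have hrange : LinearMap.range h = ⊤ := LinearMap.range_eq_top.mpr hsurj
  have hrn := LinearMap.finrank_range_add_finrank_ker h
  rw [hrange, finrank_top] at hrn
  rw [← hS] at hrn
  have hprod : Module.finrank (ZMod 2) (↥(dualCode C₁) × ↥(dualCode C₂)) =
      Module.finrank (ZMod 2) ↥(dualCode C₁) + Module.finrank (ZMod 2) ↥(dualCode C₂) :=
    Module.finrank_prod
  have hfinD : Module.finrank (ZMod 2) D = Module.finrank (ZMod 2) S :=
    ((Submodule.equivMapOfInjective _ (appendMapL_injective C₁ C₂) S).finrank_eq).symm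
  have hkC₁ : Module.finrank (ZMod 2) C₁ ≤ n₁ := by
    have := Submodule.finrank_le C₁
    simpa using this
  -- conclude self-duality
  have hfr : Module.finrank (ZMod 2) (dualCode D) ≤ Module.finrank (ZMod 2) D := by
    omega
  refine ⟨D, hcarrier, ?_, hDE⟩
  exact (Submodule.eq_of_le_of_finrank_le hle hfr).symm
end
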